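/- arXiv:2510.05704 — 3 statements merged into one kernel-verified Lean document; each statement's English description precedes it below -/
import Mathlib

section
/- For b > 0, the map F(x) = x / (1 + b‖x‖) on a real inner product space is strictly monotone: for all x ≠ y, ⟨F(x) − F(y), x − y⟩ > 0. -/
theorem strainLimiting_strictMonotone
    {V : Type*} [NormedAddCommGroup V] [InnerProductSpace ℝ V]
    (b : ℝ) (hb : 0 < b) (x y : V) (hxy : x ≠ y) :
    (0 : ℝ) < inner ℝ ((1 + b * ‖x‖)⁻¹ • x - (1 + b * ‖y‖)⁻¹ • y) (x - y) := by
  set s := ‖x‖ with hs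
  set t := ‖y‖ with ht
  have hsn : 0 ≤ s := norm_nonneg x
  have htn : 0 ≤ t := norm_nonneg y
  have hαpos : 0 < 1 + b * s := by positivity
  have hβpos : 0 < 1 + b * t := by positivity
  set α := (1 + b * s)⁻¹ with hα
  set β := (1 + b * t)⁻¹ with hβ
  have hαp : 0 < α := inv_pos.mpr hαpos
  have hβp : 0 < β := inv_pos.mpr hβpos
  set p : ℝ := inner ℝ x y with hp
  have hexp : (inner ℝ (α • x - β • y) (x - y) : ℝ)
      = α * s ^ 2 + β * t ^ 2 - (α + β) * p := by
    simp only [inner_sub_left, inner_sub_right, real_inner_smul_left,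
      real_inner_self_eq_norm_sq, ← hs, ← ht]
    rw [hp, real_inner_comm x y]
    ring
  have hkey : α * s ^ 2 + β * t ^ 2 - (α + β) * (s * t)
      = α * β * (s - t) ^ 2 := by
    rw [hα, hβ]
    field_simp
    ring
  have hcs : p ≤ s * t := real_inner_le_norm x y
  rw [hexp]
  have hrw : α * s ^ 2 + β * t ^ 2 - (α + β) * p
      = α * β * (s - t) ^ 2 + (α + β) * (s * t - p) := by
    rw [← hkey]; ring
  rw [hrw]
  rcases lt_or_eq_of_le hcs with hlt | heq
  · have h1 : 0 ≤ α * β * (s - t) ^ 2 := by positivity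
    have h2 : 0 < (α + β) * (s * t - p) := by
      apply mul_pos (by linarith) (by linarith)
    linarith
  · -- equality in Cauchy–Schwarz: ‖y‖ • x = ‖x‖ • y
    have heq' : ‖y‖ • x = ‖x‖ • y := inner_eq_norm_mul_iff_real.mp heq
    have hst : s ≠ t := by
      intro h
      rcases eq_or_lt_of_le htn with h0 | h0
      · apply hxy
        have hs0 : s = 0 := by rw [h, ← h0]
        have hx0 : x = 0 := norm_eq_zero.mp hs0
        have hy0 : y = 0 := norm_eq_zero.mp h0.symm
        rw [hx0, hy0]
      · apply hxy
        have hnorm : ‖x‖ = ‖y‖ := h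
        have h2 : ‖y‖ • x = ‖y‖ • y := by rw [heq', hnorm]
        exact smul_right_injective V (ne_of_gt h0) h2
    have h1 : 0 < α * β * (s - t) ^ 2 := by
      have h2 : 0 < (s - t) ^ 2 := by
        have h3 : s - t ≠ 0 := sub_ne_zero.mpr hst
        rw [← sq_abs]; exact pow_pos (abs_pos.mpr h3) 2
      exact mul_pos (mul_pos hαp hβp) h2
    nlinarith
end

section
/- For b > 0, the map F(x) = x / (1 + b‖x‖) on a real inner product space is Lipschitz continuous with Lipschitz constant 1. -/
open RealInnerProductSpace

theorem strainLimiting_lipschitz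
    {V : Type*} [NormedAddCommGroup V] [InnerProductSpace ℝ V]
    (b : ℝ) (hb : 0 < b) :
    LipschitzWith 1 (fun x : V => (1 + b * ‖x‖)⁻¹ • x) := by
  apply LipschitzWith.of_dist_le_mul
  intro x y
  simp only [dist_eq_norm, NNReal.coe_one, one_mul]
  set a := ‖x‖ with ha
  set c := ‖y‖ with hc
  have ha0 : 0 ≤ a := norm_nonneg x
  have hc0 : 0 ≤ c := norm_nonneg y
  have hs : (0:ℝ) < 1 + b * a := by nlinarith
  have ht : (0:ℝ) < 1 + b * c := by nlinarith
  have hp : |(inner ℝ x y : ℝ)| ≤ a * c := abs_real_inner_le_norm x y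
  have hp1 : (inner ℝ x y : ℝ) ≤ a * c := le_trans (le_abs_self _) hp
  have hp2 : -(a * c) ≤ (inner ℝ x y : ℝ) := neg_le_of_abs_le hp
  apply le_of_pow_le_pow_left₀ two_ne_zero (norm_nonneg _)
  rw [@norm_sub_sq_real V, @norm_sub_sq_real V]
  rw [real_inner_smul_left, real_inner_smul_right, norm_smul, norm_smul]
  simp only [Real.norm_eq_abs, abs_inv]
  rw [abs_of_pos hs, abs_of_pos ht, ← ha, ← hc]
  have key : ((1 + b * a)⁻¹ * a) ^ 2 - 2 * ((1 + b * a)⁻¹ * ((1 + b * c)⁻¹ * (inner ℝ x y : ℝ)))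
      + ((1 + b * c)⁻¹ * c) ^ 2 ≤ a ^ 2 - 2 * (inner ℝ x y : ℝ) + c ^ 2 := by
    have h2 : (0:ℝ) ≤ (1 + b * a) * (1 + b * c) - 1 := by
      nlinarith [mul_nonneg hb.le ha0, mul_nonneg hb.le hc0,
        mul_nonneg (mul_nonneg hb.le ha0) (mul_nonneg hb.le hc0)]
    have h1 : (0:ℝ) ≤ ((1 + b * a) * (1 + b * c)) ^ 2 - 1 := by
      nlinarith [mul_pos hs ht]
    rw [inv_mul_eq_div, inv_mul_eq_div, inv_mul_eq_div, inv_mul_eq_div]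
    rw [div_pow, div_pow, div_div]
    rw [← sub_nonneg]
    have e1 : a ^ 2 - 2 * (inner ℝ x y : ℝ) + c ^ 2 -
        (a ^ 2 / (1 + b * a) ^ 2 - 2 * ((inner ℝ x y : ℝ) / ((1 + b * c) * (1 + b * a)))
          + c ^ 2 / (1 + b * c) ^ 2) =
        (a ^ 2 * ((1 + b * c) ^ 2 * ((1 + b * a) ^ 2 - 1))
          + c ^ 2 * ((1 + b * a) ^ 2 * ((1 + b * c) ^ 2 - 1))
          - 2 * (inner ℝ x y : ℝ) * ((1 + b * a) * (1 + b * c)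
              * ((1 + b * a) * (1 + b * c) - 1)))
          / ((1 + b * a) ^ 2 * (1 + b * c) ^ 2) := by
      field_simp
      ring
    rw [e1]
    apply div_nonneg _ (by positivity)
    nlinarith [mul_nonneg (sq_nonneg (b * a - b * c)) h1,
      mul_nonneg (mul_nonneg (sub_nonneg.mpr hp2) h2) (le_of_lt (mul_pos hs ht)),
      mul_nonneg (mul_nonneg (sub_nonneg.mpr hp1) h2) (le_of_lt (mul_pos hs ht)),
      sq_nonneg (a - c), sq_nonneg (a + c), mul_pos hs ht]
  calc ((1 + b * a)⁻¹ * a) ^ 2 - 2 * ((1 + b * a)⁻¹ * ((1 + b * c)⁻¹ * (inner ℝ x y : ℝ)))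
      + ((1 + b * c)⁻¹ * c) ^ 2 ≤ a ^ 2 - 2 * (inner ℝ x y : ℝ) + c ^ 2 := key
end

section
/- If a map F on a complete normed space satisfies the strong monotonicity and Lipschitz conditions ⟨F(x) − F(y), x − y⟩ ≥ c‖x − y‖² and ‖F(x) − F(y)‖ ≤ L‖x − y‖ with 0 < c ≤ L, then for any target vector z the equation F(x) = z has a unique solution, obtained as the fixed point of the contraction x ↦ x − ρ(F(x) − z) for ρ = c/L². -/
theorem zarantonello_exists_unique
    {H : Type*} [NormedAddCommGroup H] [InnerProductSpace ℝ H]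
    [CompleteSpace H] (F : H → H) (c L : ℝ) (hc : 0 < c) (hcL : c ≤ L)
    (hmono : ∀ x y : H, c * ‖x - y‖ ^ 2 ≤ inner ℝ (F x - F y) (x - y))
    (hlip : ∀ x y : H, ‖F x - F y‖ ≤ L * ‖x - y‖) :
    ∀ z : H, ∃! x : H, F x = z := by
  intro z
  have hL : 0 < L := lt_of_lt_of_le hc hcL
  set ρ : ℝ := c / L ^ 2 with hρ
  have hρpos : 0 < ρ := div_pos hc (by positivity)
  set T : H → H := fun x => x - ρ • (F x - z) with hT
  have key : ∀ x y : H, ‖T x - T y‖ ^ 2 ≤ (1 - (c / L) ^ 2) * ‖x - y‖ ^ 2 := by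
    intro x y
    have h1 : T x - T y = (x - y) - ρ • (F x - F y) := by
      simp only [hT, smul_sub]; abel
    rw [h1]
    have expand : ‖(x - y) - ρ • (F x - F y)‖ ^ 2
        = ‖x - y‖ ^ 2 - 2 * (ρ * inner ℝ (F x - F y) (x - y)) + ρ ^ 2 * ‖F x - F y‖ ^ 2 := by
      rw [norm_sub_sq_real, real_inner_smul_right, real_inner_comm, norm_smul]
      rw [Real.norm_eq_abs, abs_of_pos hρpos]
      ring
    rw [expand]
    have h2 : c * ‖x - y‖ ^ 2 ≤ inner ℝ (F x - F y) (x - y) := hmono x y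
    have h3 : ‖F x - F y‖ ^ 2 ≤ (L * ‖x - y‖) ^ 2 := by
      apply sq_le_sq' <;> nlinarith [hlip x y, norm_nonneg (F x - F y), norm_nonneg (x - y)]
    have e1 : ρ ^ 2 * (L * ‖x - y‖) ^ 2 = ρ * c * ‖x - y‖ ^ 2 := by
      rw [hρ]; field_simp
    have e2 : (1 - (c / L) ^ 2) * ‖x - y‖ ^ 2 = ‖x - y‖ ^ 2 - ρ * c * ‖x - y‖ ^ 2 := by
      rw [hρ]; field_simp
    linarith [mul_le_mul_of_nonneg_left h2 (by positivity : (0:ℝ) ≤ 2 * ρ),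
      mul_le_mul_of_nonneg_left h3 (sq_nonneg ρ)]
  set k : ℝ := Real.sqrt (1 - (c / L) ^ 2) with hk
  have hcL1 : (c / L) ^ 2 ≤ 1 := by
    rw [sq_le_one_iff_abs_le_one, abs_of_pos (div_pos hc hL)]
    exact div_le_one_of_le₀ hcL hL.le
  have hk2 : k ^ 2 = 1 - (c / L) ^ 2 := Real.sq_sqrt (by linarith)
  have h0 : 0 < (c / L) ^ 2 := by positivity
  have hk1 : k < 1 := by
    calc k = Real.sqrt (1 - (c / L) ^ 2) := hk
      _ < Real.sqrt 1 := Real.sqrt_lt_sqrt (by linarith) (by linarith)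
      _ = 1 := Real.sqrt_one
  have hlipT : ∀ x y : H, ‖T x - T y‖ ≤ k * ‖x - y‖ := by
    intro x y
    have h := key x y
    have hnn : 0 ≤ k * ‖x - y‖ := by positivity
    nlinarith [norm_nonneg (T x - T y), hnn]
  set K : NNReal := ⟨k, Real.sqrt_nonneg _⟩ with hK
  have hcontr : ContractingWith K T := by
    constructor
    · exact_mod_cast hk1
    · rw [lipschitzWith_iff_dist_le_mul]
      intro x y
      rw [dist_eq_norm, dist_eq_norm]
      exact hlipT x y
  obtain ⟨x, hx⟩ := hcontr.exists_fixedPoint (0 : H) (edist_ne_top _ _)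
  have hfix : ∀ w : H, T w = w ↔ F w = z := by
    intro w
    simp only [hT, sub_eq_self, smul_eq_zero, sub_eq_zero]
    constructor
    · rintro (h | h)
      · exact absurd h hρpos.ne'
      · exact h
    · exact fun h => Or.inr h
  refine ⟨x, (hfix x).mp hx.1, ?_⟩
  intro y hy
  have h2 := hmono y x
  rw [hy, (hfix x).mp hx.1, sub_self] at h2
  simp only [inner_zero_left] at h2
  have : ‖y - x‖ ^ 2 ≤ 0 := by nlinarith
  have : ‖y - x‖ = 0 := by nlinarith [norm_nonneg (y - x), sq_nonneg (‖y - x‖)]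
  rwa [norm_eq_zero, sub_eq_zero] at this
end
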